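/- Let 𝔤 be a finite-dimensional complex simple Lie algebra with Cartan subalgebra 𝔥, ℓ a nonnegative integer, λ₁ a dominant integral weight with ⟨λ₁,θ⟩ ≤ ℓ where θ is the highest root, and x_θ a highest root vector. Then as left U(𝔤)-modules there is an isomorphism ((L_{λ₁} ⊗ U(𝔤))/W') ⊗_{U(𝔤)/⟨x_θ^{ℓ+1}⟩} L_{λ₂} ≅ (L_{λ₁} ⊗ L_{λ₂})/W, where W' is the subbimodule of L_{λ₁} ⊗ U(𝔤) generated by v_{λ₁} ⊗ x_θ^{ℓ−⟨λ₁,θ⟩+1} and W is the U(𝔤)-submodule of L_{λ₁} ⊗ L_{λ₂} generated by all v_{λ₁} ⊗ x_θ^{ℓ−⟨λ₁,θ⟩+1}·w for w ∈ L_{λ₂}. -/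

import Mathlib

open TensorProduct

attribute [local instance 100] LieRing.ofAssociativeRing

set_option linter.unusedSectionVars false
set_option linter.unusedVariables false

noncomputable section Stmt11

variable (𝔤 : Type) [LieRing 𝔤] [LieAlgebra ℂ 𝔤]
variable (M₁ M₂ : Type)
variable [AddCommGroup M₁] [Module ℂ M₁] [LieRingModule 𝔤 M₁] [LieModule ℂ 𝔤 M₁]
variable [AddCommGroup M₂] [Module ℂ M₂] [LieRingModule 𝔤 M₂] [LieModule ℂ 𝔤 M₂]

/-- The universal enveloping algebra `U(𝔤)`. -/
abbrev UEnv : Type := UniversalEnvelopingAlgebra ℂ 𝔤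

/-- The action of `U(𝔤)` on a Lie module, via the universal property. -/
def uAct : UEnv 𝔤 →ₐ[ℂ] Module.End ℂ M₂ :=
  UniversalEnvelopingAlgebra.lift ℂ (LieModule.toEnd ℂ 𝔤 M₂)

/-- The left `𝔤`-action on `M₁ ⊗ U(𝔤)`: `x·(v ⊗ y) = (x·v) ⊗ y + v ⊗ xy`. -/
def Lact (x : 𝔤) : Module.End ℂ (M₁ ⊗[ℂ] UEnv 𝔤) :=
  TensorProduct.map (LieModule.toEnd ℂ 𝔤 M₁ x) LinearMap.id
    + TensorProduct.map LinearMap.id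
        (LinearMap.mulLeft ℂ ((UniversalEnvelopingAlgebra.ι ℂ : 𝔤 →ₗ⁅ℂ⁆ UEnv 𝔤) x))

/-- The right `U(𝔤)`-action on `M₁ ⊗ U(𝔤)`: `(v ⊗ y)·u = v ⊗ yu`. -/
def Ract (u : UEnv 𝔤) : Module.End ℂ (M₁ ⊗[ℂ] UEnv 𝔤) :=
  TensorProduct.map LinearMap.id (LinearMap.mulRight ℂ u)

/-- The diagonal `𝔤`-action on `M₁ ⊗ M₂`. -/
def Dact (x : 𝔤) : Module.End ℂ (M₁ ⊗[ℂ] M₂) :=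
  TensorProduct.map (LieModule.toEnd ℂ 𝔤 M₁ x) LinearMap.id
    + TensorProduct.map LinearMap.id (LieModule.toEnd ℂ 𝔤 M₂ x)

/-- The sub-bimodule `W'` of `M₁ ⊗ U(𝔤)` generated by `v_{λ₁} ⊗ x_θ^q`. -/
def Wprime (vlam : M₁) (xtheta : 𝔤) (q : ℕ) : Submodule ℂ (M₁ ⊗[ℂ] UEnv 𝔤) :=
  sInf {p | vlam ⊗ₜ (((UniversalEnvelopingAlgebra.ι ℂ : 𝔤 →ₗ⁅ℂ⁆ UEnv 𝔤) xtheta) ^ q) ∈ p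
    ∧ (∀ (x : 𝔤), ∀ t ∈ p, Lact 𝔤 M₁ x t ∈ p)
    ∧ (∀ (u : UEnv 𝔤), ∀ t ∈ p, Ract 𝔤 M₁ u t ∈ p)}

/-- The relation submodule defining `((M₁ ⊗ U)/W') ⊗_{U/⟨x_θ^{ℓ+1}⟩} M₂` as a quotient of
`(M₁ ⊗ U) ⊗ M₂`: elements of `W'` tensored with `M₂`, together with the balancing relations
`(t·u) ⊗ m − t ⊗ (u·m)`. -/
def relSub (vlam : M₁) (xtheta : 𝔤) (q : ℕ) :
    Submodule ℂ ((M₁ ⊗[ℂ] UEnv 𝔤) ⊗[ℂ] M₂) :=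
  Submodule.span ℂ
    ({z | ∃ w ∈ Wprime 𝔤 M₁ vlam xtheta q, ∃ m : M₂, z = w ⊗ₜ m}
      ∪ {z | ∃ (t : M₁ ⊗[ℂ] UEnv 𝔤) (u : UEnv 𝔤) (m : M₂),
          z = (Ract 𝔤 M₁ u t) ⊗ₜ m - t ⊗ₜ (uAct 𝔤 M₂ u m)})

/-- The `U(𝔤)`-submodule `W` of `M₁ ⊗ M₂` generated by the `v_{λ₁} ⊗ x_θ^q ⋅ w`, `w ∈ M₂`. -/
def Wsub (vlam : M₁) (xtheta : 𝔤) (q : ℕ) : Submodule ℂ (M₁ ⊗[ℂ] M₂) :=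
  sInf {p | (∀ m : M₂,
      vlam ⊗ₜ (uAct 𝔤 M₂ ((((UniversalEnvelopingAlgebra.ι ℂ : 𝔤 →ₗ⁅ℂ⁆ UEnv 𝔤) xtheta) ^ q)) m)
        ∈ p)
    ∧ ∀ (x : 𝔤), ∀ t ∈ p, Dact 𝔤 M₁ M₂ x t ∈ p}

/-- The left `𝔤`-action on `(M₁ ⊗ U(𝔤)) ⊗ M₂` through the first (bimodule) factor. -/
def LactTM (x : 𝔤) : Module.End ℂ ((M₁ ⊗[ℂ] UEnv 𝔤) ⊗[ℂ] M₂) :=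
  TensorProduct.map (Lact 𝔤 M₁ x) LinearMap.id

/-! ### Auxiliary lemmas -/

/-- The map `φ : (M₁ ⊗ U(𝔤)) ⊗ M₂ → M₁ ⊗ M₂`, `(v ⊗ u) ⊗ m ↦ v ⊗ (u·m)`. -/
def phiMap : (M₁ ⊗[ℂ] UEnv 𝔤) ⊗[ℂ] M₂ →ₗ[ℂ] M₁ ⊗[ℂ] M₂ :=
  (TensorProduct.map LinearMap.id
      (TensorProduct.lift (uAct 𝔤 M₂).toLinearMap)) ∘ₗ
    (TensorProduct.assoc ℂ M₁ (UEnv 𝔤) M₂).toLinearMap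

/-- The map `ψ : M₁ ⊗ M₂ → (M₁ ⊗ U(𝔤)) ⊗ M₂`, `v ⊗ m ↦ (v ⊗ 1) ⊗ m`. -/
def psiMap : M₁ ⊗[ℂ] M₂ →ₗ[ℂ] (M₁ ⊗[ℂ] UEnv 𝔤) ⊗[ℂ] M₂ :=
  TensorProduct.map ((TensorProduct.mk ℂ M₁ (UEnv 𝔤)).flip 1) LinearMap.id

lemma phiMap_tmul (v : M₁) (y : UEnv 𝔤) (m : M₂) :
    phiMap 𝔤 M₁ M₂ ((v ⊗ₜ y) ⊗ₜ m) = v ⊗ₜ (uAct 𝔤 M₂ y m) := rfl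

lemma psiMap_tmul (v : M₁) (m : M₂) :
    psiMap 𝔤 M₁ M₂ (v ⊗ₜ m) = (v ⊗ₜ (1 : UEnv 𝔤)) ⊗ₜ m := rfl

lemma uAct_ι (x : 𝔤) (m : M₂) :
    uAct 𝔤 M₂ ((UniversalEnvelopingAlgebra.ι ℂ : 𝔤 →ₗ⁅ℂ⁆ UEnv 𝔤) x) m = ⁅x, m⁆ := by
  simp [uAct, UniversalEnvelopingAlgebra.lift_ι_apply]

lemma phiMap_Ract (u : UEnv 𝔤) (t : M₁ ⊗[ℂ] UEnv 𝔤) (m : M₂) :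
    phiMap 𝔤 M₁ M₂ ((Ract 𝔤 M₁ u t) ⊗ₜ m)
      = phiMap 𝔤 M₁ M₂ (t ⊗ₜ (uAct 𝔤 M₂ u m)) := by
  induction t using TensorProduct.induction_on with
  | zero => simp [Ract]
  | tmul v y =>
      simp only [Ract, TensorProduct.map_tmul, LinearMap.id_apply,
        LinearMap.mulRight_apply, phiMap_tmul, map_mul, Module.End.mul_apply]
  | add a b ha hb =>
      simp only [map_add, TensorProduct.add_tmul] at *
      rw [ha, hb]

lemma phiMap_Lact (x : 𝔤) (t : M₁ ⊗[ℂ] UEnv 𝔤) (m : M₂) :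
    phiMap 𝔤 M₁ M₂ ((Lact 𝔤 M₁ x t) ⊗ₜ m)
      = Dact 𝔤 M₁ M₂ x (phiMap 𝔤 M₁ M₂ (t ⊗ₜ m)) := by
  induction t using TensorProduct.induction_on with
  | zero => simp [Lact]
  | tmul v y =>
      simp only [Lact, Dact, LinearMap.add_apply, TensorProduct.map_tmul,
        LinearMap.id_apply, LinearMap.mulLeft_apply, TensorProduct.add_tmul,
        map_add, phiMap_tmul, map_mul, Module.End.mul_apply, uAct_ι,
        LieModule.toEnd_apply_apply]
  | add a b ha hb =>
      simp only [map_add, TensorProduct.add_tmul] at *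
      rw [ha, hb]

lemma phiMap_LactTM (x : 𝔤) (z : (M₁ ⊗[ℂ] UEnv 𝔤) ⊗[ℂ] M₂) :
    phiMap 𝔤 M₁ M₂ (LactTM 𝔤 M₁ M₂ x z) = Dact 𝔤 M₁ M₂ x (phiMap 𝔤 M₁ M₂ z) := by
  induction z using TensorProduct.induction_on with
  | zero => simp
  | tmul t m =>
      simpa only [LactTM, TensorProduct.map_tmul, LinearMap.id_apply] using
        phiMap_Lact 𝔤 M₁ M₂ x t m
  | add a b ha hb => simp only [map_add, ha, hb]

section WprimeWsub

variable (vlam : M₁) (xtheta : 𝔤) (q : ℕ)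

lemma Wprime_gen :
    vlam ⊗ₜ (((UniversalEnvelopingAlgebra.ι ℂ : 𝔤 →ₗ⁅ℂ⁆ UEnv 𝔤) xtheta) ^ q)
      ∈ Wprime 𝔤 M₁ vlam xtheta q :=
  Submodule.mem_sInf.2 fun _ hp => hp.1

lemma Wprime_Lact (x : 𝔤) {t} (ht : t ∈ Wprime 𝔤 M₁ vlam xtheta q) :
    Lact 𝔤 M₁ x t ∈ Wprime 𝔤 M₁ vlam xtheta q :=
  Submodule.mem_sInf.2 fun p hp => hp.2.1 x t (Submodule.mem_sInf.1 ht p hp)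

lemma Wprime_Ract (u : UEnv 𝔤) {t} (ht : t ∈ Wprime 𝔤 M₁ vlam xtheta q) :
    Ract 𝔤 M₁ u t ∈ Wprime 𝔤 M₁ vlam xtheta q :=
  Submodule.mem_sInf.2 fun p hp => hp.2.2 u t (Submodule.mem_sInf.1 ht p hp)

lemma Wsub_gen (m : M₂) :
    vlam ⊗ₜ (uAct 𝔤 M₂ ((((UniversalEnvelopingAlgebra.ι ℂ : 𝔤 →ₗ⁅ℂ⁆ UEnv 𝔤) xtheta) ^ q)) m)
      ∈ Wsub 𝔤 M₁ M₂ vlam xtheta q :=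
  Submodule.mem_sInf.2 fun _ hp => hp.1 m

lemma Wsub_Dact (x : 𝔤) {t} (ht : t ∈ Wsub 𝔤 M₁ M₂ vlam xtheta q) :
    Dact 𝔤 M₁ M₂ x t ∈ Wsub 𝔤 M₁ M₂ vlam xtheta q :=
  Submodule.mem_sInf.2 fun p hp => hp.2 x t (Submodule.mem_sInf.1 ht p hp)

lemma phiMap_Wprime {w} (hw : w ∈ Wprime 𝔤 M₁ vlam xtheta q) (m : M₂) :
    phiMap 𝔤 M₁ M₂ (w ⊗ₜ m) ∈ Wsub 𝔤 M₁ M₂ vlam xtheta q := by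
  set P : Submodule ℂ (M₁ ⊗[ℂ] UEnv 𝔤) :=
    ⨅ m' : M₂, Submodule.comap
      ((phiMap 𝔤 M₁ M₂) ∘ₗ ((TensorProduct.mk ℂ (M₁ ⊗[ℂ] UEnv 𝔤) M₂).flip m'))
      (Wsub 𝔤 M₁ M₂ vlam xtheta q) with hP
  have hPmem : ∀ {t}, t ∈ P ↔ ∀ m' : M₂,
      phiMap 𝔤 M₁ M₂ (t ⊗ₜ m') ∈ Wsub 𝔤 M₁ M₂ vlam xtheta q := by
    intro t
    simp [hP, Submodule.mem_iInf, Submodule.mem_comap, TensorProduct.mk_apply]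
  have hWP : Wprime 𝔤 M₁ vlam xtheta q ≤ P := by
    apply sInf_le
    refine ⟨?_, ?_, ?_⟩
    · exact hPmem.2 fun m' => Wsub_gen 𝔤 M₁ M₂ vlam xtheta q m'
    · intro x t ht
      exact hPmem.2 fun m' => by
        rw [phiMap_Lact]
        exact Wsub_Dact 𝔤 M₁ M₂ vlam xtheta q x (hPmem.1 ht m')
    · intro u t ht
      exact hPmem.2 fun m' => by
        rw [phiMap_Ract]
        exact hPmem.1 ht _
  exact hPmem.1 (hWP hw) m

lemma phiMap_relSub :
    relSub 𝔤 M₁ M₂ vlam xtheta q ≤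
      LinearMap.ker ((Wsub 𝔤 M₁ M₂ vlam xtheta q).mkQ ∘ₗ phiMap 𝔤 M₁ M₂) := by
  rw [relSub, Submodule.span_le]
  rintro z (⟨w, hw, m, rfl⟩ | ⟨t, u, m, rfl⟩)
  · simp only [SetLike.mem_coe, LinearMap.mem_ker, LinearMap.comp_apply,
      Submodule.mkQ_apply, Submodule.Quotient.mk_eq_zero]
    exact phiMap_Wprime 𝔤 M₁ M₂ vlam xtheta q hw m
  · simp only [SetLike.mem_coe, LinearMap.mem_ker, LinearMap.comp_apply, map_sub,
      Submodule.mkQ_apply]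
    rw [phiMap_Ract]
    simp

lemma Lact_Ract_comm (x : 𝔤) (u : UEnv 𝔤) (t : M₁ ⊗[ℂ] UEnv 𝔤) :
    Lact 𝔤 M₁ x (Ract 𝔤 M₁ u t) = Ract 𝔤 M₁ u (Lact 𝔤 M₁ x t) := by
  induction t using TensorProduct.induction_on with
  | zero => simp
  | tmul v y =>
      simp [Lact, Ract, TensorProduct.tmul_add, mul_assoc]
  | add a b ha hb => simp only [map_add, ha, hb]

lemma relSub_LactTM (x : 𝔤) {z} (hz : z ∈ relSub 𝔤 M₁ M₂ vlam xtheta q) :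
    LactTM 𝔤 M₁ M₂ x z ∈ relSub 𝔤 M₁ M₂ vlam xtheta q := by
  have : relSub 𝔤 M₁ M₂ vlam xtheta q ≤
      Submodule.comap (LactTM 𝔤 M₁ M₂ x) (relSub 𝔤 M₁ M₂ vlam xtheta q) := by
    rw [relSub, Submodule.span_le]
    rintro z (⟨w, hw, m, rfl⟩ | ⟨t, u, m, rfl⟩) <;>
      simp only [SetLike.mem_coe, Submodule.mem_comap, LactTM, map_sub,
        TensorProduct.map_tmul, LinearMap.id_apply]
    · exact Submodule.subset_span (Or.inl ⟨_, Wprime_Lact 𝔤 M₁ vlam xtheta q x hw, m, rfl⟩)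
    · rw [Lact_Ract_comm]
      exact Submodule.subset_span (Or.inr ⟨Lact 𝔤 M₁ x t, u, m, rfl⟩)
  exact this hz

lemma psiMap_Dact (x : 𝔤) (t : M₁ ⊗[ℂ] M₂) :
    psiMap 𝔤 M₁ M₂ (Dact 𝔤 M₁ M₂ x t) - LactTM 𝔤 M₁ M₂ x (psiMap 𝔤 M₁ M₂ t)
      ∈ relSub 𝔤 M₁ M₂ vlam xtheta q := by
  induction t using TensorProduct.induction_on with
  | zero => simp
  | tmul v m =>
      have key : psiMap 𝔤 M₁ M₂ (Dact 𝔤 M₁ M₂ x (v ⊗ₜ m))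
            - LactTM 𝔤 M₁ M₂ x (psiMap 𝔤 M₁ M₂ (v ⊗ₜ m))
          = -((Ract 𝔤 M₁ ((UniversalEnvelopingAlgebra.ι ℂ : 𝔤 →ₗ⁅ℂ⁆ UEnv 𝔤) x)
                (v ⊗ₜ (1 : UEnv 𝔤))) ⊗ₜ m
              - (v ⊗ₜ (1 : UEnv 𝔤)) ⊗ₜ
                (uAct 𝔤 M₂ ((UniversalEnvelopingAlgebra.ι ℂ : 𝔤 →ₗ⁅ℂ⁆ UEnv 𝔤) x) m)) := by
        simp only [Dact, Lact, LactTM, LinearMap.add_apply, map_add, psiMap_tmul,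
          TensorProduct.map_tmul, LinearMap.id_apply, LieModule.toEnd_apply_apply,
          Ract, LinearMap.mulLeft_apply, LinearMap.mulRight_apply, mul_one, one_mul,
          uAct_ι, TensorProduct.add_tmul]
        abel
      rw [key]
      exact Submodule.neg_mem _ (Submodule.subset_span (Or.inr ⟨_, _, _, rfl⟩))
  | add a b ha hb =>
      rw [map_add, map_add, map_add, map_add]
      have : psiMap 𝔤 M₁ M₂ (Dact 𝔤 M₁ M₂ x a) + psiMap 𝔤 M₁ M₂ (Dact 𝔤 M₁ M₂ x b)
          - (LactTM 𝔤 M₁ M₂ x (psiMap 𝔤 M₁ M₂ a) + LactTM 𝔤 M₁ M₂ x (psiMap 𝔤 M₁ M₂ b))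
          = (psiMap 𝔤 M₁ M₂ (Dact 𝔤 M₁ M₂ x a) - LactTM 𝔤 M₁ M₂ x (psiMap 𝔤 M₁ M₂ a))
            + (psiMap 𝔤 M₁ M₂ (Dact 𝔤 M₁ M₂ x b)
              - LactTM 𝔤 M₁ M₂ x (psiMap 𝔤 M₁ M₂ b)) := by abel
      rw [this]
      exact Submodule.add_mem _ ha hb

lemma Wsub_psiMap :
    Wsub 𝔤 M₁ M₂ vlam xtheta q ≤
      LinearMap.ker ((relSub 𝔤 M₁ M₂ vlam xtheta q).mkQ ∘ₗ psiMap 𝔤 M₁ M₂) := by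
  apply sInf_le
  constructor
  · intro m
    simp only [Set.mem_setOf_eq, LinearMap.mem_ker, LinearMap.comp_apply,
      Submodule.mkQ_apply, Submodule.Quotient.mk_eq_zero, psiMap_tmul]
    have h1 : ((Ract 𝔤 M₁ ((((UniversalEnvelopingAlgebra.ι ℂ : 𝔤 →ₗ⁅ℂ⁆ UEnv 𝔤) xtheta) ^ q))
          (vlam ⊗ₜ (1 : UEnv 𝔤))) ⊗ₜ m)
        - (vlam ⊗ₜ (1 : UEnv 𝔤)) ⊗ₜ
            (uAct 𝔤 M₂ ((((UniversalEnvelopingAlgebra.ι ℂ : 𝔤 →ₗ⁅ℂ⁆ UEnv 𝔤) xtheta) ^ q)) m)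
        ∈ relSub 𝔤 M₁ M₂ vlam xtheta q :=
      Submodule.subset_span (Or.inr ⟨_, _, _, rfl⟩)
    have h2 : (vlam ⊗ₜ (((UniversalEnvelopingAlgebra.ι ℂ : 𝔤 →ₗ⁅ℂ⁆ UEnv 𝔤) xtheta) ^ q)) ⊗ₜ m
        ∈ relSub 𝔤 M₁ M₂ vlam xtheta q :=
      Submodule.subset_span (Or.inl ⟨_, Wprime_gen 𝔤 M₁ vlam xtheta q, m, rfl⟩)
    have h3 : Ract 𝔤 M₁ ((((UniversalEnvelopingAlgebra.ι ℂ : 𝔤 →ₗ⁅ℂ⁆ UEnv 𝔤) xtheta) ^ q))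
          (vlam ⊗ₜ (1 : UEnv 𝔤))
        = vlam ⊗ₜ (((UniversalEnvelopingAlgebra.ι ℂ : 𝔤 →ₗ⁅ℂ⁆ UEnv 𝔤) xtheta) ^ q) := by
      simp [Ract]
    rw [h3] at h1
    have := Submodule.sub_mem _ h2 h1
    simpa using this
  · intro x t ht
    simp only [Set.mem_setOf_eq, LinearMap.mem_ker, LinearMap.comp_apply,
      Submodule.mkQ_apply, Submodule.Quotient.mk_eq_zero] at ht ⊢
    have h1 := psiMap_Dact 𝔤 M₁ M₂ vlam xtheta q x t
    have h2 := relSub_LactTM 𝔤 M₁ M₂ vlam xtheta q x ht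
    have := Submodule.add_mem _ h1 h2
    simpa using this

lemma phiMap_psiMap (t : M₁ ⊗[ℂ] M₂) :
    phiMap 𝔤 M₁ M₂ (psiMap 𝔤 M₁ M₂ t) = t := by
  induction t using TensorProduct.induction_on with
  | zero => simp
  | tmul v m => simp [psiMap_tmul, phiMap_tmul, map_one]
  | add a b ha hb => simp [ha, hb]

lemma psiMap_phiMap (vlam : M₁) (xtheta : 𝔤) (q : ℕ) (z : (M₁ ⊗[ℂ] UEnv 𝔤) ⊗[ℂ] M₂) :
    psiMap 𝔤 M₁ M₂ (phiMap 𝔤 M₁ M₂ z) - z ∈ relSub 𝔤 M₁ M₂ vlam xtheta q := by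
  induction z using TensorProduct.induction_on with
  | zero => simp
  | tmul t m =>
      induction t using TensorProduct.induction_on with
      | zero => simp [TensorProduct.zero_tmul]
      | tmul v y =>
          have key : psiMap 𝔤 M₁ M₂ (phiMap 𝔤 M₁ M₂ ((v ⊗ₜ y) ⊗ₜ m)) - (v ⊗ₜ y) ⊗ₜ m
              = -((Ract 𝔤 M₁ y (v ⊗ₜ (1 : UEnv 𝔤))) ⊗ₜ m
                  - (v ⊗ₜ (1 : UEnv 𝔤)) ⊗ₜ (uAct 𝔤 M₂ y m)) := by
            simp only [phiMap_tmul, psiMap_tmul, Ract, TensorProduct.map_tmul,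
              LinearMap.id_apply, LinearMap.mulRight_apply, one_mul]
            abel
          rw [key]
          exact Submodule.neg_mem _ (Submodule.subset_span (Or.inr ⟨_, _, _, rfl⟩))
      | add a b ha hb =>
          have : psiMap 𝔤 M₁ M₂ (phiMap 𝔤 M₁ M₂ ((a + b) ⊗ₜ m)) - (a + b) ⊗ₜ m
              = (psiMap 𝔤 M₁ M₂ (phiMap 𝔤 M₁ M₂ (a ⊗ₜ m)) - a ⊗ₜ m)
                + (psiMap 𝔤 M₁ M₂ (phiMap 𝔤 M₁ M₂ (b ⊗ₜ m)) - b ⊗ₜ m) := by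
            rw [TensorProduct.add_tmul, map_add, map_add]
            abel
          rw [this]
          exact Submodule.add_mem _ ha hb
  | add a b ha hb =>
      have : psiMap 𝔤 M₁ M₂ (phiMap 𝔤 M₁ M₂ (a + b)) - (a + b)
          = (psiMap 𝔤 M₁ M₂ (phiMap 𝔤 M₁ M₂ a) - a)
            + (psiMap 𝔤 M₁ M₂ (phiMap 𝔤 M₁ M₂ b) - b) := by
        rw [map_add, map_add]; abel
      rw [this]
      exact Submodule.add_mem _ ha hb

end WprimeWsub


/-- for a finite-dimensional complex simple Lie algebra `𝔤`, irreducible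
finite-dimensional modules `M₁ = L_{λ₁}` (with highest weight vector `vlam`) and
`M₂ = L_{λ₂}`, highest root vector `xtheta = x_θ`, level `ℓ` and `c = ⟨λ₁,θ⟩ ≤ ℓ`,
`q = ℓ − c + 1`, there is an isomorphism of left `U(𝔤)`-modules
`((L_{λ₁} ⊗ U(𝔤))/W') ⊗_{U(𝔤)/⟨x_θ^{ℓ+1}⟩} L_{λ₂} ≅ (L_{λ₁} ⊗ L_{λ₂})/W`,
expressed as a `ℂ`-linear equivalence of the corresponding quotients intertwining the
`𝔤`-actions. -/
theorem zhu_bimodule_tensor_iso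
    [FiniteDimensional ℂ 𝔤] [LieAlgebra.IsSimple ℂ 𝔤]
    [FiniteDimensional ℂ M₁] [FiniteDimensional ℂ M₂]
    [LieModule.IsIrreducible ℂ 𝔤 M₁] [LieModule.IsIrreducible ℂ 𝔤 M₂]
    (vlam : M₁) (hv : vlam ≠ 0) (xtheta : 𝔤)
    (hhw : ⁅xtheta, vlam⁆ = 0)
    (ℓ c : ℕ) (hc : c ≤ ℓ)
    (hnil : ∀ m : M₂,
      uAct 𝔤 M₂ ((((UniversalEnvelopingAlgebra.ι ℂ : 𝔤 →ₗ⁅ℂ⁆ UEnv 𝔤) xtheta) ^ (ℓ + 1))) m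
        = 0) :
    ∃ e : (((M₁ ⊗[ℂ] UEnv 𝔤) ⊗[ℂ] M₂) ⧸ relSub 𝔤 M₁ M₂ vlam xtheta (ℓ - c + 1))
            ≃ₗ[ℂ] ((M₁ ⊗[ℂ] M₂) ⧸ Wsub 𝔤 M₁ M₂ vlam xtheta (ℓ - c + 1)),
      ∀ (x : 𝔤) (a : (M₁ ⊗[ℂ] UEnv 𝔤) ⊗[ℂ] M₂) (b : M₁ ⊗[ℂ] M₂),
        e (Submodule.Quotient.mk a) = Submodule.Quotient.mk b →
        e (Submodule.Quotient.mk (LactTM 𝔤 M₁ M₂ x a))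
          = Submodule.Quotient.mk (Dact 𝔤 M₁ M₂ x b) := by
  classical
  set q := ℓ - c + 1 with hq
  set f := Submodule.liftQ (relSub 𝔤 M₁ M₂ vlam xtheta q)
      ((Wsub 𝔤 M₁ M₂ vlam xtheta q).mkQ ∘ₗ phiMap 𝔤 M₁ M₂)
      (phiMap_relSub 𝔤 M₁ M₂ vlam xtheta q) with hf
  set g := Submodule.liftQ (Wsub 𝔤 M₁ M₂ vlam xtheta q)
      ((relSub 𝔤 M₁ M₂ vlam xtheta q).mkQ ∘ₗ psiMap 𝔤 M₁ M₂)
      (Wsub_psiMap 𝔤 M₁ M₂ vlam xtheta q) with hg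
  have happf : ∀ z, f (Submodule.Quotient.mk z) = Submodule.Quotient.mk (phiMap 𝔤 M₁ M₂ z) :=
    fun z => rfl
  have happg : ∀ t, g (Submodule.Quotient.mk t) = Submodule.Quotient.mk (psiMap 𝔤 M₁ M₂ t) :=
    fun t => rfl
  have hfg : f ∘ₗ g = LinearMap.id := by
    apply Submodule.linearMap_qext
    refine LinearMap.ext fun t => ?_
    simp only [LinearMap.comp_apply, Submodule.mkQ_apply, LinearMap.id_apply,
      happg, happf, phiMap_psiMap]
  have hgf : g ∘ₗ f = LinearMap.id := by
    apply Submodule.linearMap_qext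
    refine LinearMap.ext fun z => ?_
    simp only [LinearMap.comp_apply, Submodule.mkQ_apply, LinearMap.id_apply, happf, happg]
    exact (Submodule.Quotient.eq _).2 (psiMap_phiMap 𝔤 M₁ M₂ vlam xtheta q z)
  refine ⟨LinearEquiv.ofLinear f g hfg hgf, ?_⟩
  intro x a b hab
  simp only [LinearEquiv.ofLinear_apply, happf] at hab ⊢
  rw [phiMap_LactTM]
  have hmem : phiMap 𝔤 M₁ M₂ a - b ∈ Wsub 𝔤 M₁ M₂ vlam xtheta q :=
    (Submodule.Quotient.eq _).1 hab
  refine (Submodule.Quotient.eq _).2 ?_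
  have := Wsub_Dact 𝔤 M₁ M₂ vlam xtheta q x hmem
  rwa [map_sub] at this

end Stmt11
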